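/- If an NFA M (without ε-transitions) accepts a word w of length n via a unique accepting path of length n, and some state p is visited at least k+1 times during this accepting computation (k ≥ 2), then w contains a k-th power as a factor: there exists a nonempty word c such that c^k is a factor of w. -/

import Mathlib

/-- `IsAccPath M n v s` says that `s` is an accepting path of length `n` in the
NFA `M` (no ε-transitions) spelling the word `v`: it starts in a start state,
ends in an accepting state, and each step follows a transition labeled by the
corresponding letter of `v`. -/
def IsAccPath {α σ : Type*} (M : NFA α σ) (n : ℕ) (v : List α)
    (s : Fin (n + 1) → σ) : Prop :=
  ∃ h : v.length = n,
    s 0 ∈ M.start ∧ s (Fin.last n) ∈ M.accept ∧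
    ∀ i : Fin n, s i.succ ∈ M.step (s i.castSucc) (v.get (Fin.cast h.symm i))

/-- `UniquelyAccepts M w` says that `M` accepts `w` and there is exactly one
accepting path of length `|w|` over all words of length `|w|`; it spells `w`. -/
def UniquelyAccepts {α σ : Type*} (M : NFA α σ) (w : List α) : Prop :=
  (∃ s, IsAccPath M w.length w s) ∧
  (∀ (v : List α) (s : Fin (w.length + 1) → σ), IsAccPath M w.length v s → v = w) ∧
  (∀ s s' : Fin (w.length + 1) → σ,
    IsAccPath M w.length w s → IsAccPath M w.length w s' → s = s')

/-- `listPow c k` is the `k`-fold concatenation of the word `c` with itself. -/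
def listPow {α : Type*} (c : List α) (k : ℕ) : List α := (List.replicate k c).flatten

/-- index remapping that swaps the segment `[a,b)` with the segment `[b,c)`. -/
def swapIdx (a b c i : ℕ) : ℕ :=
  if i < a then i
  else if i < a + (c - b) then b + (i - a)
  else if i < c then a + (i - a - (c - b))
  else i

/-- `ℕ`-indexed version of a path. -/
def natPath {σ : Type*} (n : ℕ) (s : Fin (n + 1) → σ) : ℕ → σ :=
  fun x => s ⟨min x n, by omega⟩

lemma natPath_eq {σ : Type*} (n : ℕ) (s : Fin (n + 1) → σ) (x : ℕ) (h : x ≤ n) :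
    natPath n s x = s ⟨x, by omega⟩ := by
  simp [natPath, Nat.min_eq_left h]

lemma swap_aux {α σ : Type*} (M : NFA α σ) (w : List α) (hacc : UniquelyAccepts M w)
    (s : Fin (w.length + 1) → σ) (hs : IsAccPath M w.length w s)
    (a b c : ℕ) (hab : a ≤ b) (hbc : b ≤ c) (hcn : c ≤ w.length)
    (hpab : s ⟨a, by omega⟩ = s ⟨b, by omega⟩)
    (hpbc : s ⟨b, by omega⟩ = s ⟨c, by omega⟩) :
    (∀ j, j < c - b → w[a + j]? = w[b + j]?) ∧
    (∀ j, j < b - a → w[a + j]? = w[a + (c - b) + j]?) := by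
  obtain ⟨hw, h0, hl, hstep⟩ := hs
  -- ℕ-indexed path
  set t : ℕ → σ := natPath w.length s with htdef
  have ht : ∀ x (h : x ≤ w.length), t x = s ⟨x, by omega⟩ := fun x h => natPath_eq w.length s x h
  have tab : t a = t b := by rw [ht a (by omega), ht b (by omega)]; exact hpab
  have tbc : t b = t c := by rw [ht b (by omega), ht c (by omega)]; exact hpbc
  -- ℕ-indexed step relation
  have hstepN : ∀ j (hj : j < w.length) (x : α), w[j]? = some x →
      t (j + 1) ∈ M.step (t j) x := by
    intro j hj x hx
    have h5 : w[j]'hj = x := by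
      rw [List.getElem?_eq_getElem hj] at hx
      exact Option.some.inj hx
    have h4 := hstep ⟨j, hj⟩
    have h6 : w.get (Fin.cast hw.symm ⟨j, hj⟩) = x := by
      rw [List.get_eq_getElem]; exact h5
    rw [h6, Fin.succ_mk, Fin.castSucc_mk] at h4
    rw [ht (j + 1) (by omega), ht j (by omega)]
    exact h4
  -- the swapped word
  set v' : List α := w.take a ++ ((w.drop b).take (c - b) ++
      ((w.drop a).take (b - a) ++ w.drop c)) with hv'
  have lA : (w.take a).length = a := by simp; omega
  have lB : ((w.drop b).take (c - b)).length = c - b := by simp; omega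
  have lC : ((w.drop a).take (b - a)).length = b - a := by simp; omega
  have hlenv : v'.length = w.length := by simp [hv']; omega
  -- the letter lemma
  have hlet : ∀ i, v'[i]? = w[swapIdx a b c i]? := by
    intro i
    rcases Nat.lt_or_ge i a with h1 | h1
    · rw [hv', List.getElem?_append_left (by rw [lA]; exact h1),
        List.getElem?_take, if_pos h1,
        show swapIdx a b c i = i from by unfold swapIdx; rw [if_pos h1]]
    · rcases Nat.lt_or_ge i (a + (c - b)) with h2 | h2
      · rw [hv', List.getElem?_append_right (by rw [lA]; omega), lA,
          List.getElem?_append_left (by rw [lB]; omega),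
          List.getElem?_take, if_pos (by omega), List.getElem?_drop,
          show swapIdx a b c i = b + (i - a) from by
            unfold swapIdx; rw [if_neg (by omega), if_pos h2]]
      · rcases Nat.lt_or_ge i c with h3 | h3
        · rw [hv', List.getElem?_append_right (by rw [lA]; omega), lA,
            List.getElem?_append_right (by rw [lB]; omega), lB,
            List.getElem?_append_left (by rw [lC]; omega),
            List.getElem?_take, if_pos (by omega), List.getElem?_drop,
            show swapIdx a b c i = a + (i - a - (c - b)) from by
              unfold swapIdx; rw [if_neg (by omega), if_neg (by omega), if_pos h3]]
        · rw [hv', List.getElem?_append_right (by rw [lA]; omega), lA,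
            List.getElem?_append_right (by rw [lB]; omega), lB,
            List.getElem?_append_right (by rw [lC]; omega), lC,
            List.getElem?_drop,
            show c + (i - a - (c - b) - (b - a)) = i from by omega,
            show swapIdx a b c i = i from by
              unfold swapIdx; rw [if_neg (by omega), if_neg (by omega), if_neg (by omega)]]
  -- the swapped path satisfies the step relation
  have main : ∀ i, i < w.length → ∀ x, w[swapIdx a b c i]? = some x →
      t (swapIdx a b c (i + 1)) ∈ M.step (t (swapIdx a b c i)) x := by
    intro i hi x hx
    rcases Nat.lt_or_ge (i + 1) a with h1 | h1
    · -- interior of region 1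
      rw [show swapIdx a b c i = i from by unfold swapIdx; rw [if_pos (by omega)]] at hx
      rw [show swapIdx a b c i = i from by unfold swapIdx; rw [if_pos (by omega)],
        show swapIdx a b c (i + 1) = i + 1 from by unfold swapIdx; rw [if_pos h1]]
      exact hstepN i (by omega) x hx
    · rcases Nat.lt_or_ge i a with h1' | h1'
      · -- i + 1 = a
        have hia : i + 1 = a := by omega
        rw [show swapIdx a b c i = i from by unfold swapIdx; rw [if_pos h1']] at hx
        rw [show swapIdx a b c i = i from by unfold swapIdx; rw [if_pos h1']]
        have base := hstepN i (by omega) x hx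
        have e2 : t (swapIdx a b c (i + 1)) = t (i + 1) := by
          rw [hia]
          unfold swapIdx
          rw [if_neg (by omega)]
          rcases Nat.lt_or_ge a (a + (c - b)) with hcb | hcb
          · rw [if_pos hcb, show b + (a - a) = b from by omega, ← tab]
          · rw [if_neg (by omega)]
            rcases Nat.lt_or_ge a c with hac | hac
            · rw [if_pos hac, show a + (a - a - (c - b)) = a from by omega]
            · rw [if_neg (by omega : ¬ a < c)]
        rw [e2]
        exact base
      · rcases Nat.lt_or_ge (i + 1) (a + (c - b)) with h2 | h2
        · -- interior of region 2
          have e1 : swapIdx a b c i = b + (i - a) := by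
            unfold swapIdx; rw [if_neg (by omega), if_pos (by omega)]
          have e2 : swapIdx a b c (i + 1) = b + (i - a) + 1 := by
            unfold swapIdx; rw [if_neg (by omega), if_pos h2]; omega
          rw [e1] at hx
          rw [e1, e2]
          exact hstepN (b + (i - a)) (by omega) x hx
        · rcases Nat.lt_or_ge i (a + (c - b)) with h2' | h2'
          · -- i + 1 = a + (c - b), so b < c
            have hcb : b < c := by omega
            have e1 : swapIdx a b c i = b + (i - a) := by
              unfold swapIdx; rw [if_neg (by omega), if_pos h2']
            have hbi : b + (i - a) + 1 = c := by omega
            rw [e1] at hx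
            rw [e1]
            have base := hstepN (b + (i - a)) (by omega) x hx
            rw [hbi] at base
            have e2 : t (swapIdx a b c (i + 1)) = t c := by
              unfold swapIdx
              rw [if_neg (by omega), if_neg (by omega)]
              rcases Nat.lt_or_ge (i + 1) c with hac | hac
              · rw [if_pos hac, show a + (i + 1 - a - (c - b)) = a from by omega]
                rw [tab, tbc]
              · rw [if_neg (by omega : ¬ i + 1 < c), show i + 1 = c from by omega]
            rw [e2]
            exact base
          · rcases Nat.lt_or_ge (i + 1) c with h3 | h3
            · -- interior of region 3
              have e1 : swapIdx a b c i = a + (i - a - (c - b)) := by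
                unfold swapIdx; rw [if_neg (by omega), if_neg (by omega), if_pos (by omega)]
              have e2 : swapIdx a b c (i + 1) = a + (i - a - (c - b)) + 1 := by
                unfold swapIdx; rw [if_neg (by omega), if_neg (by omega), if_pos h3]; omega
              rw [e1] at hx
              rw [e1, e2]
              exact hstepN (a + (i - a - (c - b))) (by omega) x hx
            · rcases Nat.lt_or_ge i c with h3' | h3'
              · -- i + 1 = c, region 3 nonempty, so a < b
                have hic : i + 1 = c := by omega
                have hab' : a < b := by omega
                have e1 : swapIdx a b c i = b - 1 := by
                  unfold swapIdx; rw [if_neg (by omega), if_neg (by omega), if_pos h3']; omega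
                rw [e1] at hx
                rw [e1]
                have base := hstepN (b - 1) (by omega) x hx
                rw [show b - 1 + 1 = b from by omega] at base
                have e2 : swapIdx a b c (i + 1) = c := by
                  rw [hic]
                  unfold swapIdx
                  rw [if_neg (by omega), if_neg (by omega), if_neg (by omega)]
                rw [e2, ← tbc]
                exact base
              · -- region 4
                have e1 : swapIdx a b c i = i := by
                  unfold swapIdx; rw [if_neg (by omega), if_neg (by omega), if_neg (by omega)]
                have e2 : swapIdx a b c (i + 1) = i + 1 := by
                  unfold swapIdx; rw [if_neg (by omega), if_neg (by omega), if_neg (by omega)]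
                rw [e1] at hx
                rw [e1, e2]
                exact hstepN i (by omega) x hx
  -- the swapped path is an accepting path
  set s' : Fin (w.length + 1) → σ := fun j => t (swapIdx a b c j.val) with hs'def
  have hpath : IsAccPath M w.length v' s' := by
    refine ⟨hlenv, ?_, ?_, ?_⟩
    · -- start
      show t (swapIdx a b c ((0 : Fin (w.length + 1)).val)) ∈ M.start
      rw [Fin.val_zero]
      have h00 : swapIdx a b c 0 = 0 ∨ (swapIdx a b c 0 = b ∧ a = 0) := by
        unfold swapIdx; split_ifs <;> omega
      have hz : ∀ (pf : 0 < w.length + 1), (⟨0, pf⟩ : Fin (w.length + 1)) = 0 :=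
        fun pf => by simp [Fin.ext_iff]
      rcases h00 with h00 | ⟨h00, ha0⟩
      · rw [h00, ht 0 (by omega), hz]
        exact h0
      · subst ha0
        rw [h00, ht b (by omega), ← hpab, hz]
        exact h0
    · -- accept
      show t (swapIdx a b c ((Fin.last w.length).val)) ∈ M.accept
      rw [Fin.val_last,
        show swapIdx a b c w.length = w.length from by unfold swapIdx; split_ifs <;> omega,
        ht w.length le_rfl]
      exact hl
    · intro i
      have hxq : w[swapIdx a b c i.val]? = some (v'.get (Fin.cast hlenv.symm i)) := by
        rw [← hlet i.val, List.get_eq_getElem,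
          List.getElem?_eq_getElem (show (i : ℕ) < v'.length by rw [hlenv]; exact i.isLt)]
        rfl
      exact main i.val i.isLt _ hxq
  have hveq : v' = w := hacc.2.1 v' s' hpath
  have key : ∀ i, w[i]? = w[swapIdx a b c i]? := by
    intro i
    conv_lhs => rw [← hveq]
    exact hlet i
  constructor
  · intro j hj
    have := key (a + j)
    rwa [show swapIdx a b c (a + j) = b + j from by
      unfold swapIdx; rw [if_neg (by omega), if_pos (by omega)]; omega] at this
  · intro j hj
    have := key (a + (c - b) + j)
    rw [show swapIdx a b c (a + (c - b) + j) = a + j from by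
      unfold swapIdx; rw [if_neg (by omega), if_neg (by omega), if_pos (by omega)]; omega] at this
    exact this.symm

theorem stmt_16 {α σ : Type*} [DecidableEq σ] (M : NFA α σ) (w : List α) (k : ℕ) (hk : 2 ≤ k)
    (hacc : UniquelyAccepts M w)
    (s : Fin (w.length + 1) → σ) (hs : IsAccPath M w.length w s)
    (p : σ) (hvisit : k + 1 ≤ (Finset.univ.filter (fun i : Fin (w.length + 1) => s i = p)).card) :
    ∃ c : List α, c ≠ [] ∧ listPow c k <:+: w := by
  classical
  obtain ⟨F', hF'sub, hF'card⟩ := Finset.exists_subset_card_eq hvisit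
  set e := F'.orderEmbOfFin hF'card with he
  have hmem : ∀ j, s (e j) = p := by
    intro j
    have h1 := Finset.orderEmbOfFin_mem F' hF'card j
    have h2 := hF'sub h1
    simpa using (Finset.mem_filter.mp h2).2
  have hmono : StrictMono e := (F'.orderEmbOfFin hF'card).strictMono
  set u : Fin (k + 1) → ℕ := fun j => (e j : ℕ) with hu
  have humono : ∀ {j j' : Fin (k + 1)}, j < j' → u j < u j' := by
    intro j j' h
    exact hmono h
  have humo : ∀ {j j' : Fin (k + 1)}, j ≤ j' → u j ≤ u j' := by
    intro j j' h
    exact (F'.orderEmbOfFin hF'card).monotone h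
  have hbound : ∀ j, u j ≤ w.length := fun j => by
    have h1 : u j = (e j : ℕ) := rfl
    have := (e j).isLt; omega
  set g : Fin k → ℕ := fun j => u j.succ - u j.castSucc with hg
  obtain ⟨m, -, hmin⟩ := Finset.exists_min_image Finset.univ g
    ⟨⟨0, by omega⟩, Finset.mem_univ _⟩
  set d : ℕ := g m with hd
  have hd1 : 1 ≤ d := by
    have := humono (Fin.castSucc_lt_succ : m.castSucc < m.succ)
    simp only [hd, hg]
    omega
  -- positions
  set i0 : Fin (k + 1) := ⟨0, by omega⟩ with hi0
  set ik : Fin (k + 1) := ⟨k, by omega⟩ with hik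
  have hsum : ∀ j : ℕ, (hj : j < k + 1) → u i0 + j * d ≤ u ⟨j, hj⟩ := by
    intro j
    induction j with
    | zero => intro hj; simp [hi0]
    | succ j ih =>
      intro hj
      have hj' : j < k + 1 := by omega
      have h1 := ih hj'
      have hjk : j < k := by omega
      have hgap : d ≤ u ⟨j + 1, hj⟩ - u ⟨j, hj'⟩ := by
        have h2 := hmin ⟨j, hjk⟩ (Finset.mem_univ _)
        rw [hd] at h2 ⊢
        exact h2
      have hlt : u ⟨j, hj'⟩ < u ⟨j + 1, hj⟩ := humono (by simp [Fin.mk_lt_mk])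
      have : (j + 1) * d = j * d + d := by ring
      omega
  have h0m : u i0 ≤ u m.castSucc := humo (by simp [hi0, Fin.le_def])
  have hmm1 : u m.castSucc < u m.succ := humono (Fin.castSucc_lt_succ : m.castSucc < m.succ)
  have hdam : u m.succ = u m.castSucc + d := by
    have : d = u m.succ - u m.castSucc := by rw [hd, hg]
    omega
  have hm1k : u m.succ ≤ u ik := humo (by
    simp [hik, Fin.le_def])
  have hksum : u i0 + k * d ≤ u ik := hsum k (by omega)
  have hakn : u ik ≤ w.length := hbound ik
  -- state values
  have hsj : ∀ (j : Fin (k + 1)) (pf : u j < w.length + 1), s ⟨u j, pf⟩ = p := by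
    intro j pf
    rw [show (⟨u j, pf⟩ : Fin (w.length + 1)) = e j from Fin.ext rfl]
    exact hmem j
  -- apply the swap lemma to the two triples
  obtain ⟨-, P1⟩ := swap_aux M w hacc s hs (u i0) (u m.castSucc) (u m.succ)
    h0m (le_of_lt hmm1) (le_trans hm1k hakn)
    ((hsj i0 (by omega)).trans (hsj m.castSucc (by omega)).symm)
    ((hsj m.castSucc (by omega)).trans (hsj m.succ (by omega)).symm)
  obtain ⟨P2, -⟩ := swap_aux M w hacc s hs (u m.castSucc) (u m.succ) (u ik)
    (le_of_lt hmm1) hm1k hakn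
    ((hsj m.castSucc (by omega)).trans (hsj m.succ (by omega)).symm)
    ((hsj m.succ (by omega)).trans (hsj ik (by omega)).symm)
  -- combined periodicity
  have P : ∀ i, u i0 ≤ i → i + d < u ik → w[i]? = w[i + d]? := by
    intro i h1 h2
    rcases Nat.lt_or_ge i (u m.castSucc) with h3 | h3
    · have := P1 (i - u i0) (by omega)
      rw [show u i0 + (i - u i0) = i from by omega,
        show u i0 + (u m.succ - u m.castSucc) + (i - u i0) = i + d from by omega] at this
      exact this
    · have := P2 (i - u m.castSucc) (by omega)
      rw [show u m.castSucc + (i - u m.castSucc) = i from by omega,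
        show u m.succ + (i - u m.castSucc) = i + d from by omega] at this
      exact this
  set a0 := u i0 with ha0
  have hdk : d ≤ k * d := Nat.le_mul_of_pos_left d (by omega)
  -- iterated periodicity
  have R : ∀ j, j + 1 ≤ k → ∀ r, r < d → w[a0 + r]? = w[a0 + j * d + r]? := by
    intro j
    induction j with
    | zero => intro _ r hr; rw [show a0 + 0 * d + r = a0 + r from by omega]
    | succ j ih =>
      intro hj r hr
      have h1 := ih (by omega) r hr
      have hA : (j + 2) * d = j * d + 2 * d := by ring
      have hB : (j + 2) * d ≤ k * d := Nat.mul_le_mul_right d (by omega)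
      have h2 := P (a0 + j * d + r) (by omega) (by omega)
      rw [show a0 + (j + 1) * d + r = a0 + j * d + r + d from by ring]
      exact h1.trans h2
  set cw : List α := (w.drop a0).take d with hcw
  have hlcw : cw.length = d := by
    rw [hcw]
    simp
    omega
  have Q : ∀ j, j ≤ k → listPow cw j = (w.drop a0).take (j * d) := by
    intro j
    induction j with
    | zero => intro _; simp [listPow]
    | succ j ih =>
      intro hj
      have hQ := ih (by omega)
      have hseg : ((w.drop a0).drop (j * d)).take d = cw := by
        rw [List.drop_drop, hcw]
        apply List.ext_getElem?
        intro i
        rw [List.getElem?_take, List.getElem?_take]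
        rcases Nat.lt_or_ge i d with hi | hi
        · rw [if_pos hi, if_pos hi, List.getElem?_drop, List.getElem?_drop]
          exact (R j (by omega) i hi).symm
        · rw [if_neg (by omega), if_neg (by omega)]
      calc listPow cw (j + 1) = listPow cw j ++ cw := by
            simp [listPow, List.replicate_succ']
        _ = (w.drop a0).take (j * d) ++ ((w.drop a0).drop (j * d)).take d := by
            rw [hQ, hseg]
        _ = (w.drop a0).take ((j + 1) * d) := by
            rw [← List.take_add]
            congr 1
            ring
  refine ⟨cw, ?_, ?_⟩
  · have : 0 < cw.length := by rw [hlcw]; omega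
    exact List.length_pos_iff.mp this
  · refine ⟨w.take a0, (w.drop a0).drop (k * d), ?_⟩
    rw [Q k le_rfl, List.append_assoc, List.take_append_drop, List.take_append_drop]
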